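/- Let (f,g) be a Chu transform witnessing (L,⊨,S) ≤ (L',⊨',S') with dense g, suppose both L and L' are closed under conjunctions of fewer than λ sentences, ⊨ and ⊨' satisfy the Tarski truth conditions for such conjunctions, and f preserves conjunctions of size < λ up to L'-equivalence. Then for any cardinal θ, if (L',⊨',S') is (θ,λ)-compact, so is (L,⊨,S). -/
import Mathlib


universe u

open Cardinal

/-- Chu transforms with dense second component preserve `(θ,λ)`-compactness downwards,
provided both logics are closed under conjunctions of `< λ` sentences with Tarski semantics
and `f` preserves such conjunctions up to `L'`-equivalence. -/
theorem chu_preserves_theta_lambda_compactness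
    {L S L' S' : Type u} (sat : S → L → Prop) (sat' : S' → L' → Prop)
    (lam : Cardinal.{u})
    (f : L → L') (g : S' → S)
    (hadj : ∀ (φ : L) (s' : S'), sat' s' (f φ) ↔ sat (g s') φ)
    (hdense : ∀ φ : L, (∃ s, sat s φ) → ∃ s', sat (g s') φ)
    (conjL : Set L → L) (conjL' : Set L' → L')
    (hconjL : ∀ Φ : Set L, #Φ < lam → ∀ s, sat s (conjL Φ) ↔ ∀ φ ∈ Φ, sat s φ)
    (hconjL' : ∀ Φ' : Set L', #Φ' < lam → ∀ s', sat' s' (conjL' Φ') ↔ ∀ φ' ∈ Φ', sat' s' φ')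
    (hf : ∀ Φ : Set L, #Φ < lam →
      ∀ s', sat' s' (f (conjL Φ)) ↔ sat' s' (conjL' (f '' Φ))) :
    ∀ θ : Cardinal.{u},
      (∀ Sig' : Set L', #Sig' ≤ θ →
        (∀ Γ' ⊆ Sig', #Γ' < lam → ∃ s', ∀ φ' ∈ Γ', sat' s' φ') →
        ∃ s', ∀ φ' ∈ Sig', sat' s' φ') →
      (∀ Sig : Set L, #Sig ≤ θ →
        (∀ Γ ⊆ Sig, #Γ < lam → ∃ s, ∀ φ ∈ Γ, sat s φ) →
        ∃ s, ∀ φ ∈ Sig, sat s φ) := by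
  intro θ hcomp Sig hSigcard hfin
  obtain ⟨s', hs'⟩ := hcomp (f '' Sig) (le_trans Cardinal.mk_image_le hSigcard) (by
    intro Γ' hsub hcard
    choose ψ hψ1 hψ2 using fun (x : Γ') => hsub x.2
    set Γ : Set L := Set.range ψ with hΓ
    have hΓsub : Γ ⊆ Sig := by rintro _ ⟨x, rfl⟩; exact hψ1 x
    have hΓcard : #Γ < lam := lt_of_le_of_lt Cardinal.mk_range_le hcard
    obtain ⟨s, hs⟩ := hfin Γ hΓsub hΓcard
    obtain ⟨s', hs'⟩ := hdense (conjL Γ) ⟨s, (hconjL Γ hΓcard s).mpr hs⟩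
    have h2 : sat' s' (conjL' (f '' Γ)) := (hf Γ hΓcard s').mp ((hadj _ _).mpr hs')
    have h3 := (hconjL' (f '' Γ) (lt_of_le_of_lt Cardinal.mk_image_le hΓcard) s').mp h2
    refine ⟨s', fun φ' hφ' => ?_⟩
    have he : φ' = f (ψ ⟨φ', hφ'⟩) := (hψ2 ⟨φ', hφ'⟩).symm
    rw [he]
    exact h3 _ ⟨ψ ⟨φ', hφ'⟩, ⟨⟨φ', hφ'⟩, rfl⟩, rfl⟩)
  exact ⟨g s', fun φ hφ => (hadj φ s').mp (hs' (f φ) ⟨φ, hφ, rfl⟩)⟩
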